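/- Let the index sets I_{cd} ⊆ A × B, for (c,d) ∈ C × D, form a partition of A × B into nonempty sets, and define the MaxPool of x ∈ ℝ^{A×B} by MP(x)_{cd} = max_{i ∈ I_{cd}} x_i. Let p ∈ ℝ^{C×D} with p ≥ 0 entrywise, and define f : ℝ^{A×B} → ℝ by f(x) = Σ_{(c,d)} p_{cd} · MP([x]⁺)_{cd}. Then the convex conjugate f*(z) = sup_{x ∈ ℝ^{A×B}} (⟨z, x⟩ − f(x)) (valued in the extended reals) satisfies: f*(z) = 0 if z ≥ 0 entrywise and Σ_{i ∈ I_{cd}} z_i ≤ p_{cd} for every (c,d), and f*(z) = +∞ otherwise. -/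

import Mathlib

lemma aux_isup_top {ι : Type*} (g : ι → ℝ) (h : ∀ r : ℝ, ∃ x, r < g x) :
    (⨆ x, ((g x : ℝ) : EReal)) = ⊤ := by
  rw [iSup_eq_top]
  intro b hb
  induction b using EReal.rec with
  | bot => obtain ⟨x, _⟩ := h 0; exact ⟨x, bot_lt_iff_ne_bot.2 (by simp)⟩
  | coe s => obtain ⟨x, hx⟩ := h s; exact ⟨x, by exact_mod_cast hx⟩
  | top => exact absurd hb (lt_irrefl _)

theorem statement12 {A B C D : Type*} [Fintype A] [Fintype B] [Fintype C] [Fintype D]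
    (I : C × D → Finset (A × B)) (hne : ∀ cd, (I cd).Nonempty)
    (hdis : ∀ cd cd', cd ≠ cd' → Disjoint (I cd) (I cd'))
    (hcov : ∀ i : A × B, ∃ cd, i ∈ I cd)
    (p : C × D → ℝ) (hp : ∀ cd, 0 ≤ p cd) (z : A × B → ℝ) :
    (((∀ i, 0 ≤ z i) ∧ ∀ cd, ∑ i ∈ I cd, z i ≤ p cd) →
        (⨆ x : A × B → ℝ,
          (((∑ i, z i * x i)
            - ∑ cd, p cd * (I cd).sup' (hne cd) (fun i => max (x i) 0) : ℝ) : EReal)) = 0) ∧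
      (¬ ((∀ i, 0 ≤ z i) ∧ ∀ cd, ∑ i ∈ I cd, z i ≤ p cd) →
        (⨆ x : A × B → ℝ,
          (((∑ i, z i * x i)
            - ∑ cd, p cd * (I cd).sup' (hne cd) (fun i => max (x i) 0) : ℝ) : EReal)) = ⊤) := by
  classical
  set g : (A × B → ℝ) → ℝ := fun x =>
    (∑ i, z i * x i) - ∑ cd, p cd * (I cd).sup' (hne cd) (fun i => max (x i) 0) with hg
  have hg0 : g 0 = 0 := by
    simp [hg]
  constructor
  · rintro ⟨hz, hzp⟩
    apply le_antisymm
    · apply iSup_le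
      intro x
      have hx : g x ≤ 0 := by
        have huniv : (Finset.univ : Finset (A × B)) = Finset.univ.biUnion I := by
          ext i
          simpa using hcov i
        have hsplit : ∑ i, z i * x i = ∑ cd, ∑ i ∈ I cd, z i * x i := by
          rw [huniv]
          rw [Finset.sum_biUnion]
          intro cd _ cd' _ hne'
          exact hdis _ _ hne'
        have hkey : ∀ cd, ∑ i ∈ I cd, z i * x i
            ≤ p cd * (I cd).sup' (hne cd) (fun i => max (x i) 0) := by
          intro cd
          have hsupnn : 0 ≤ (I cd).sup' (hne cd) (fun i => max (x i) 0) := by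
            obtain ⟨j, hj⟩ := hne cd
            exact le_trans (le_max_right (x j) 0)
              (Finset.le_sup' (fun i => max (x i) 0) hj)
          calc ∑ i ∈ I cd, z i * x i
              ≤ ∑ i ∈ I cd, z i * (I cd).sup' (hne cd) (fun i => max (x i) 0) := by
                apply Finset.sum_le_sum
                intro i hi
                exact mul_le_mul_of_nonneg_left
                  (le_trans (le_max_left (x i) 0)
                    (Finset.le_sup' (fun i => max (x i) 0) hi)) (hz i)
            _ = (∑ i ∈ I cd, z i) * (I cd).sup' (hne cd) (fun i => max (x i) 0) := by
                rw [Finset.sum_mul]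
            _ ≤ p cd * (I cd).sup' (hne cd) (fun i => max (x i) 0) :=
                mul_le_mul_of_nonneg_right (hzp cd) hsupnn
        have : ∑ i, z i * x i ≤ ∑ cd, p cd * (I cd).sup' (hne cd) (fun i => max (x i) 0) := by
          rw [hsplit]; exact Finset.sum_le_sum fun cd _ => hkey cd
        simpa [hg] using sub_nonpos.2 this
      exact_mod_cast hx
    · have := le_iSup (fun x : A × B → ℝ => ((g x : ℝ) : EReal)) 0
      rw [hg0] at this
      simpa only [EReal.coe_zero] using this
  · intro hnot
    apply aux_isup_top
    push_neg at hnot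
    by_cases hz : ∀ i, 0 ≤ z i
    · obtain ⟨cd0, hcd0⟩ := hnot hz
      intro r
      set t : ℝ := (max r 0 + 1) / ((∑ i ∈ I cd0, z i) - p cd0) with ht
      have hd : 0 < (∑ i ∈ I cd0, z i) - p cd0 := sub_pos.2 hcd0
      have htpos : 0 < t := div_pos (by positivity) hd
      set x : A × B → ℝ := fun i => if i ∈ I cd0 then t else 0 with hxdef
      refine ⟨x, ?_⟩
      have h1 : ∑ i, z i * x i = (∑ i ∈ I cd0, z i) * t := by
        rw [Finset.sum_mul]
        rw [← Finset.sum_subset (Finset.subset_univ (I cd0))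
          (fun i _ hi => by simp [hxdef, hi])]
        apply Finset.sum_congr rfl
        intro i hi
        simp [hxdef, hi]
      have h2 : ∀ cd, p cd * (I cd).sup' (hne cd) (fun i => max (x i) 0)
          = if cd = cd0 then p cd0 * t else 0 := by
        intro cd
        by_cases hcc : cd = cd0
        · subst hcc
          rw [Finset.sup'_eq_of_forall (hne cd) _ (fun i hi => ?_), if_pos rfl]
          simp [hxdef, hi, le_of_lt htpos]
        · rw [Finset.sup'_eq_of_forall (hne cd) _ (a := 0) (fun i hi => ?_), if_neg hcc,
            mul_zero]
          have hni : i ∉ I cd0 := fun hmem =>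
            (Finset.disjoint_left.1 (hdis cd cd0 hcc) hi) hmem
          simp [hxdef, hni]
      have h3 : ∑ cd, p cd * (I cd).sup' (hne cd) (fun i => max (x i) 0) = p cd0 * t := by
        rw [Finset.sum_congr rfl fun cd _ => h2 cd]
        rw [Finset.sum_ite_eq' Finset.univ cd0 (fun _ => p cd0 * t)]
        simp
      have hval : g x = ((∑ i ∈ I cd0, z i) - p cd0) * t := by
        simp only [hg, h1, h3]; ring
      show r < g x
      rw [hval, ht, mul_div_cancel₀ _ (ne_of_gt hd)]
      calc r ≤ max r 0 := le_max_left _ _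
        _ < max r 0 + 1 := lt_add_one _
    · push_neg at hz
      obtain ⟨i0, hi0⟩ := hz
      intro r
      set t : ℝ := (max r 0 + 1) / (-z i0) with ht
      have htpos : 0 < t := div_pos (by positivity) (by linarith)
      set x : A × B → ℝ := fun i => if i = i0 then -t else 0 with hxdef
      refine ⟨x, ?_⟩
      have h1 : ∑ i, z i * x i = z i0 * (-t) := by
        rw [Finset.sum_eq_single i0]
        · simp [hxdef]
        · intro i _ hi; simp [hxdef, hi]
        · simp
      have h2 : ∀ cd, (I cd).sup' (hne cd) (fun i => max (x i) 0) = 0 := by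
        intro cd
        apply Finset.sup'_eq_of_forall
        intro i _
        by_cases hii : i = i0 <;> simp [hxdef, hii, le_of_lt htpos]
      have hval : g x = -t * z i0 := by
        simp only [hg, h1]
        rw [Finset.sum_congr rfl fun cd _ => by rw [h2 cd, mul_zero]]
        simp
        ring
      show r < g x
      rw [hval, ht]
      rw [show -((max r 0 + 1) / (-z i0)) * z i0 = max r 0 + 1 by
        have hz0 : z i0 ≠ 0 := ne_of_lt hi0
        rw [div_neg, neg_neg, div_mul_cancel₀ _ hz0]]
      calc r ≤ max r 0 := le_max_left _ _
        _ < max r 0 + 1 := lt_add_one _
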